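/- Fix an integer k ≥ 2 and a real σ > 0. For all u, t, t' ∈ {1,…,k}, the privacy ratio P_σ(t,u)/P_σ(t',u) is at most P_σ(1,1)/P_σ(k,1); i.e., the maximum of the ratio over all triples (u,t,t') is attained at u = 1, t = 1, t' = k. Equivalently, P_σ(t,u) · P_σ(k,1) ≤ P_σ(t',u) · P_σ(1,1). -/

import Mathlib

/-- Unnormalized weight of the discrete exponential randomized-response
mechanism on `{1,…,k}`: `Q_σ(t,u) = exp(−|u−t|/(kσ))`. -/
noncomputable def rrWeight (k : ℕ) (σ : ℝ) (t u : ℕ) : ℝ :=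
  Real.exp (-|(u : ℝ) - (t : ℝ)| / (k * σ))

/-- Normalizer `C_σ(t) = Σ_{v=1}^k exp(−|v−t|/(kσ))`. -/
noncomputable def rrNorm (k : ℕ) (σ : ℝ) (t : ℕ) : ℝ :=
  ∑ v ∈ Finset.Icc 1 k, rrWeight k σ t v

/-- Randomization probability `P_σ(t,u) = Q_σ(t,u) / C_σ(t)`. -/
noncomputable def rrProb (k : ℕ) (σ : ℝ) (t u : ℕ) : ℝ :=
  rrWeight k σ t u / rrNorm k σ t

lemma sum_reflect (k : ℕ) (f : ℕ → ℝ) :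
    ∑ v ∈ Finset.Icc 1 k, f v = ∑ v ∈ Finset.Icc 1 k, f (k + 1 - v) := by
  refine Finset.sum_nbij' (i := fun v => k + 1 - v) (j := fun v => k + 1 - v)
    ?_ ?_ ?_ ?_ ?_ <;> simp only [Finset.mem_Icc] <;> intro a h <;>
    first | omega | (congr 1; omega)

lemma key_abs (k u t t' v : ℝ) (hk : 2 ≤ k) (hu1 : 1 ≤ u) (huk : u ≤ k)
    (ht1 : 1 ≤ t) (htk : t ≤ k) (ht'1 : 1 ≤ t') (ht'k : t' ≤ k)
    (hv1 : 1 ≤ v) (hvk : v ≤ k) :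
    |u - t'| + |v - t| ≤ |u - t| + (k - 1) + |k + 1 - v - t'| := by
  rcases abs_cases (u - t') with ⟨h1, _⟩ | ⟨h1, _⟩ <;>
  rcases abs_cases (v - t) with ⟨h2, _⟩ | ⟨h2, _⟩ <;>
  rcases abs_cases (u - t) with ⟨h3, _⟩ | ⟨h3, _⟩ <;>
  rcases abs_cases (k + 1 - v - t') with ⟨h4, _⟩ | ⟨h4, _⟩ <;>
  linarith

lemma rrNorm_pos (k : ℕ) (hk : 1 ≤ k) (σ : ℝ) (t : ℕ) : 0 < rrNorm k σ t :=
  Finset.sum_pos (fun v _ => Real.exp_pos _) ⟨1, Finset.mem_Icc.mpr ⟨le_refl 1, hk⟩⟩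

lemma rrNorm_symm (k : ℕ) (σ : ℝ) : rrNorm k σ 1 = rrNorm k σ k := by
  unfold rrNorm
  rw [sum_reflect k (fun v => rrWeight k σ k v)]
  refine Finset.sum_congr rfl fun v hv => ?_
  rw [Finset.mem_Icc] at hv
  unfold rrWeight
  have hc : ((k + 1 - v : ℕ) : ℝ) = (k : ℝ) + 1 - v := by
    have h1 : v ≤ k + 1 := by omega
    push_cast [Nat.cast_sub h1]
    ring
  rw [hc]
  congr 1
  rw [show ((k:ℝ) + 1 - v - k) = -((v:ℝ) - 1) by ring, abs_neg]
  norm_num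

lemma rr_core (k : ℕ) (hk : 2 ≤ k) (σ : ℝ) (hσ : 0 < σ)
    (u t t' : ℕ) (hu : u ∈ Finset.Icc 1 k) (ht : t ∈ Finset.Icc 1 k)
    (ht' : t' ∈ Finset.Icc 1 k) :
    rrWeight k σ t u * rrWeight k σ k 1 * rrNorm k σ t' ≤
      rrWeight k σ t' u * rrWeight k σ 1 1 * rrNorm k σ t := by
  rw [Finset.mem_Icc] at hu ht ht'
  have hkR : (2:ℝ) ≤ (k:ℝ) := by exact_mod_cast hk
  have hkσ : (0:ℝ) < (k:ℝ) * σ := by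
    have : (0:ℝ) < (k:ℝ) := by linarith
    positivity
  unfold rrNorm
  rw [sum_reflect k (fun v => rrWeight k σ t' v), Finset.mul_sum, Finset.mul_sum]
  refine Finset.sum_le_sum fun v hv => ?_
  rw [Finset.mem_Icc] at hv
  have hc : ((k + 1 - v : ℕ) : ℝ) = (k : ℝ) + 1 - v := by
    have h1 : v ≤ k + 1 := by omega
    push_cast [Nat.cast_sub h1]
    ring
  unfold rrWeight
  rw [hc]
  simp only [← Real.exp_add]
  apply Real.exp_le_exp.mpr
  rw [← add_div, ← add_div, ← add_div, ← add_div]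
  rw [div_le_div_iff_of_pos_right hkσ]
  push_cast
  have e2 : |(1:ℝ) - (k:ℝ)| = (k:ℝ) - 1 := by
    rw [abs_sub_comm]; exact abs_of_nonneg (by linarith)
  have hu1 : (1:ℝ) ≤ (u:ℝ) := by exact_mod_cast hu.1
  have hu2 : (u:ℝ) ≤ (k:ℝ) := by exact_mod_cast hu.2
  have ht1 : (1:ℝ) ≤ (t:ℝ) := by exact_mod_cast ht.1
  have ht2 : (t:ℝ) ≤ (k:ℝ) := by exact_mod_cast ht.2
  have ht'1 : (1:ℝ) ≤ (t':ℝ) := by exact_mod_cast ht'.1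
  have ht'2 : (t':ℝ) ≤ (k:ℝ) := by exact_mod_cast ht'.2
  have hv1 : (1:ℝ) ≤ (v:ℝ) := by exact_mod_cast hv.1
  have hv2 : (v:ℝ) ≤ (k:ℝ) := by exact_mod_cast hv.2
  simp only [e2, sub_self, abs_zero]
  have := key_abs (k:ℝ) (u:ℝ) (t:ℝ) (t':ℝ) (v:ℝ) hkR hu1 hu2 ht1 ht2 ht'1 ht'2 hv1 hv2
  linarith

theorem rr_ratio_extremal (k : ℕ) (hk : 2 ≤ k) (σ : ℝ) (hσ : 0 < σ) :
    ∀ u ∈ Finset.Icc 1 k, ∀ t ∈ Finset.Icc 1 k, ∀ t' ∈ Finset.Icc 1 k,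
      rrProb k σ t u * rrProb k σ k 1 ≤ rrProb k σ t' u * rrProb k σ 1 1 := by
  intro u hu t ht t' ht'
  have hk1 : 1 ≤ k := by omega
  have hCt := rrNorm_pos k hk1 σ t
  have hCt' := rrNorm_pos k hk1 σ t'
  have hC1 := rrNorm_pos k hk1 σ 1
  have hCk := rrNorm_pos k hk1 σ k
  have hW : ∀ a b : ℕ, 0 < rrWeight k σ a b := fun a b => Real.exp_pos _
  have hsym := rrNorm_symm k σ
  have core := rr_core k hk σ hσ u t t' hu ht ht'
  unfold rrProb
  rw [div_mul_div_comm, div_mul_div_comm,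
    div_le_div_iff₀ (by positivity) (by positivity), ← hsym]
  nlinarith [mul_le_mul_of_nonneg_right core (le_of_lt hC1)]
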